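/- Let α > −1 and let l > 0 be a real number. Define, for r > 0, F₁(r) = ((l/(1+α)+1)·r^l + (l/(1+α)−1)·r^{l+2(1+α)})/(1+r^{2(1+α)}) and F₂(r) = ((l/(1+α)+1)·r^{−l+2(1+α)} + (l/(1+α)−1)·r^{−l})/(1+r^{2(1+α)}). Then both F₁ and F₂ satisfy the homogeneous equation F''(r) + F'(r)/r + (8(1+α)² r^{2α}(1+r^{2+2α})^{−2} − l²/r²) F(r) = 0 for every r > 0. -/

import Mathlib

lemma hasDerivAt_H (A B a b c : ℝ) {r : ℝ} (hr : 0 < r) :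
    HasDerivAt (fun s : ℝ => (A * s ^ a + B * s ^ b) / (1 + s ^ c))
      ((a * A * r ^ a + b * B * r ^ b + (a - c) * A * r ^ (a + c)
        + (b - c) * B * r ^ (b + c)) / (r * (1 + r ^ c) ^ 2)) r := by
  have hrne := hr.ne'
  have hcpos : (0:ℝ) < r ^ c := Real.rpow_pos_of_pos hr c
  have hDne : (1 + r ^ c) ≠ 0 := by positivity
  have hN : HasDerivAt (fun s : ℝ => A * s ^ a + B * s ^ b)
      (A * (a * r ^ (a - 1)) + B * (b * r ^ (b - 1))) r :=
    ((Real.hasDerivAt_rpow_const (Or.inl hrne)).const_mul A).add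
      ((Real.hasDerivAt_rpow_const (Or.inl hrne)).const_mul B)
  have hD : HasDerivAt (fun s : ℝ => 1 + s ^ c) (c * r ^ (c - 1)) r :=
    (Real.hasDerivAt_rpow_const (Or.inl hrne)).const_add 1
  have h := hN.div hD hDne
  refine h.congr_deriv ?_
  rw [Real.rpow_sub hr a 1, Real.rpow_sub hr b 1, Real.rpow_sub hr c 1, Real.rpow_add hr a c,
    Real.rpow_add hr b c, Real.rpow_one]
  field_simp
  ring

lemma hasDerivAt_G (A₁ B₁ A₂ B₂ a b c : ℝ) {r : ℝ} (hr : 0 < r) :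
    HasDerivAt (fun s : ℝ =>
        (A₁ * s ^ a + B₁ * s ^ b + A₂ * s ^ (a + c) + B₂ * s ^ (b + c)) / (s * (1 + s ^ c) ^ 2))
      (((a * A₁ * r ^ a + b * B₁ * r ^ b + (a + c) * A₂ * r ^ (a + c)
          + (b + c) * B₂ * r ^ (b + c)) * (1 + r ^ c)
        - (A₁ * r ^ a + B₁ * r ^ b + A₂ * r ^ (a + c) + B₂ * r ^ (b + c))
          * ((1 + r ^ c) + 2 * c * r ^ c)) / (r ^ 2 * (1 + r ^ c) ^ 3)) r := by
  have hrne := hr.ne'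
  have hcpos : (0:ℝ) < r ^ c := Real.rpow_pos_of_pos hr c
  have hDne : (1 + r ^ c) ≠ 0 := by positivity
  have hDne2 : r * (1 + r ^ c) ^ 2 ≠ 0 := by positivity
  have hP : HasDerivAt (fun s : ℝ =>
      A₁ * s ^ a + B₁ * s ^ b + A₂ * s ^ (a + c) + B₂ * s ^ (b + c))
      (A₁ * (a * r ^ (a - 1)) + B₁ * (b * r ^ (b - 1)) + A₂ * ((a + c) * r ^ (a + c - 1))
        + B₂ * ((b + c) * r ^ (b + c - 1))) r :=
    ((((Real.hasDerivAt_rpow_const (Or.inl hrne)).const_mul A₁).add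
      ((Real.hasDerivAt_rpow_const (Or.inl hrne)).const_mul B₁)).add
      ((Real.hasDerivAt_rpow_const (Or.inl hrne)).const_mul A₂)).add
      ((Real.hasDerivAt_rpow_const (Or.inl hrne)).const_mul B₂)
  have hD1 : HasDerivAt (fun s : ℝ => 1 + s ^ c) (c * r ^ (c - 1)) r :=
    (Real.hasDerivAt_rpow_const (Or.inl hrne)).const_add 1
  have hD : HasDerivAt (fun s : ℝ => s * (1 + s ^ c) ^ 2)
      (1 * (1 + r ^ c) ^ 2 + r * (2 * (1 + r ^ c) ^ 1 * (c * r ^ (c - 1)))) r :=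
    (hasDerivAt_id r).mul (hD1.pow 2)
  have h := hP.div hD hDne2
  refine h.congr_deriv ?_
  rw [Real.rpow_sub hr a 1, Real.rpow_sub hr b 1, Real.rpow_sub hr c 1,
    Real.rpow_sub hr (a + c) 1, Real.rpow_sub hr (b + c) 1,
    Real.rpow_add hr a c, Real.rpow_add hr b c, Real.rpow_one]
  field_simp
lemma ode_case (A B a b c : ℝ) (F : ℝ → ℝ) {r : ℝ} (hr : 0 < r)
    (hF : ∀ s : ℝ, 0 < s → F s = (A * s ^ a + B * s ^ b) / (1 + s ^ c)) :
    F r = (A * r ^ a + B * r ^ b) / (1 + r ^ c) ∧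
    deriv F r = (a * A * r ^ a + b * B * r ^ b + (a - c) * A * r ^ (a + c)
        + (b - c) * B * r ^ (b + c)) / (r * (1 + r ^ c) ^ 2) ∧
    deriv (deriv F) r =
      ((a * (a * A) * r ^ a + b * (b * B) * r ^ b + (a + c) * ((a - c) * A) * r ^ (a + c)
          + (b + c) * ((b - c) * B) * r ^ (b + c)) * (1 + r ^ c)
        - (a * A * r ^ a + b * B * r ^ b + (a - c) * A * r ^ (a + c)
          + (b - c) * B * r ^ (b + c)) * ((1 + r ^ c) + 2 * c * r ^ c))
        / (r ^ 2 * (1 + r ^ c) ^ 3) := by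
  have hev : ∀ s : ℝ, 0 < s →
      F =ᶠ[nhds s] fun t : ℝ => (A * t ^ a + B * t ^ b) / (1 + t ^ c) := fun s hs =>
    Filter.eventuallyEq_of_mem (isOpen_Ioi.mem_nhds hs) (fun t ht => hF t ht)
  have hd : ∀ s : ℝ, 0 < s → deriv F s =
      (a * A * s ^ a + b * B * s ^ b + (a - c) * A * s ^ (a + c)
        + (b - c) * B * s ^ (b + c)) / (s * (1 + s ^ c) ^ 2) := fun s hs => by
    rw [(hev s hs).deriv_eq, (hasDerivAt_H A B a b c hs).deriv]
  have hdev : deriv F =ᶠ[nhds r] fun s : ℝ =>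
      (a * A * s ^ a + b * B * s ^ b + (a - c) * A * s ^ (a + c)
        + (b - c) * B * s ^ (b + c)) / (s * (1 + s ^ c) ^ 2) :=
    Filter.eventuallyEq_of_mem (isOpen_Ioi.mem_nhds hr) (fun t ht => hd t ht)
  refine ⟨hF r hr, hd r hr, ?_⟩
  rw [hdev.deriv_eq, (hasDerivAt_G (a * A) (b * B) ((a - c) * A) ((b - c) * B) a b c hr).deriv]

/-- the two explicit fundamental solutions `F₁`, `F₂` of the
frequency-`l` radial homogeneous linearized equation at the standard bubble. -/
theorem stmt5 (α : ℝ) (hα : α > -1) (l : ℝ) (hl : 0 < l) (F₁ F₂ : ℝ → ℝ)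
    (hF₁ : ∀ r : ℝ, 0 < r →
      F₁ r = ((l / (1 + α) + 1) * r ^ l + (l / (1 + α) - 1) * r ^ (l + 2 * (1 + α)))
              / (1 + r ^ (2 * (1 + α))))
    (hF₂ : ∀ r : ℝ, 0 < r →
      F₂ r = ((l / (1 + α) + 1) * r ^ (-l + 2 * (1 + α)) + (l / (1 + α) - 1) * r ^ (-l))
              / (1 + r ^ (2 * (1 + α)))) :
    ∀ r : ℝ, 0 < r →
      (deriv (deriv F₁) r + deriv F₁ r / r
        + (8 * (1 + α) ^ 2 * r ^ (2 * α) / (1 + r ^ (2 + 2 * α)) ^ 2 - l ^ 2 / r ^ 2)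
          * F₁ r = 0) ∧
      (deriv (deriv F₂) r + deriv F₂ r / r
        + (8 * (1 + α) ^ 2 * r ^ (2 * α) / (1 + r ^ (2 + 2 * α)) ^ 2 - l ^ 2 / r ^ 2)
          * F₂ r = 0) := by
  intro r hr
  have hrne := hr.ne'
  have h1α : (0:ℝ) < 1 + α := by linarith
  have hV0 : (0:ℝ) < r ^ (2 * (1 + α)) := Real.rpow_pos_of_pos hr _
  have hX0 : (0:ℝ) < r ^ l := Real.rpow_pos_of_pos hr _
  have hY0 : (0:ℝ) < r ^ (-l) := Real.rpow_pos_of_pos hr _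
  have hDne : (1 : ℝ) + r ^ (2 * (1 + α)) ≠ 0 := by positivity
  have he1 : (2 + 2 * α : ℝ) = 2 * (1 + α) := by ring
  have h2α : r ^ (2 * α) = r ^ (2 * (1 + α)) / r ^ 2 := by
    rw [show (2 * α : ℝ) = 2 * (1 + α) - 2 by ring, Real.rpow_sub hr,
      show ((2:ℝ)) = ((2:ℕ):ℝ) by norm_num, Real.rpow_natCast]
  constructor
  · obtain ⟨h0, h1, h2⟩ := ode_case (l / (1 + α) + 1) (l / (1 + α) - 1) l (l + 2 * (1 + α))
      (2 * (1 + α)) F₁ hr hF₁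
    rw [h0, h1, h2, he1, h2α, Real.rpow_add hr (l + 2 * (1 + α)) (2 * (1 + α)),
      Real.rpow_add hr l (2 * (1 + α))]
    field_simp
    ring
  · obtain ⟨h0, h1, h2⟩ := ode_case (l / (1 + α) + 1) (l / (1 + α) - 1) (-l + 2 * (1 + α)) (-l)
      (2 * (1 + α)) F₂ hr hF₂
    rw [h0, h1, h2, he1, h2α, Real.rpow_add hr (-l + 2 * (1 + α)) (2 * (1 + α)),
      Real.rpow_add hr (-l) (2 * (1 + α))]
    field_simp
    ring
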